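/- Stabilizer of a rooted ribbon graph under edge twists: let G be a rooted, connected ribbon graph, and let the group T = (Z/2)^{E(G)} act on G by twisting subsets of its ribbon edges (with the root vertex's embedding held fixed). Then the stabilizer of G under T has cardinality 2^{V₁ + V₂}, where V₁ and V₂ are the numbers of non-root vertices of degree one and two respectively. Consequently |Orb_T(G)| = 2^{E(G) - V₁ - V₂}. -/

import Mathlib

/-- A configuration of a ribbon graph on a fixed set of half-edges: the vertex rotation
(a permutation of the half-edges) together with the twist bits on half-edges. -/
abbrev RibbonConfig (H : Type*) := Equiv.Perm H × (H → Bool)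

open Classical in
/-- Re-embedding of a single non-root vertex: the cyclic order of the half-edges at the
vertex (the `π`-cycle of `v`) is reversed, and every edge incident to that vertex gains a
twist (once per incident half-edge, so self-loops are twisted twice). -/
def ReEmbed {H : Type*} (α : Equiv.Perm H) (root : H) (c c' : RibbonConfig H) : Prop :=
  ∃ v : H, ¬ c.1.SameCycle root v ∧
    (∀ h, c'.1 h = if c.1.SameCycle v h then c.1⁻¹ h else c.1 h) ∧
    (∀ h, c'.2 h = xor (c.2 h)
      (xor (if c.1.SameCycle v h then true else false)
           (if c.1.SameCycle v (α h) then true else false)))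

theorem Equiv.Perm.apply_inv_self {H : Type*} (f : Equiv.Perm H) (x : H) : f (f⁻¹ x) = x :=
  Equiv.apply_symm_apply f x

theorem Equiv.Perm.inv_apply_self {H : Type*} (f : Equiv.Perm H) (x : H) : f⁻¹ (f x) = x :=
  Equiv.symm_apply_apply f x

namespace RibbonAux

variable {H : Type*}

lemma xor4 (a b c d : Bool) : xor (xor a b) (xor c d) = xor (xor a c) (xor b d) := by
  cases a <;> cases b <;> cases c <;> cases d <;> rfl

lemma xor_shuffle (t x y a b : Bool) :
    xor t (xor (xor x a) (xor y b)) = xor (xor t (xor x y)) (xor a b) := by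
  cases t <;> cases x <;> cases y <;> cases a <;> cases b <;> rfl

lemma xor_cancel_left {a x y : Bool} (h : xor a x = xor a y) : x = y := by
  cases a <;> cases x <;> cases y <;> simp_all

/-- functions invariant under `f` are constant on cycles -/
lemma invariant_congr (f : Equiv.Perm H) (B : H → Bool) (hB : ∀ h, B (f h) = B h)
    {x y : H} (h : f.SameCycle x y) : B y = B x := by
  have hpow : ∀ (n : ℕ) (x : H), B ((f ^ n) x) = B x := by
    intro n
    induction n with
    | zero => intro x; simp
    | succ n ih =>
      intro x
      have : (f ^ (n + 1)) x = (f ^ n) (f x) := by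
        rw [pow_succ]; rfl
      rw [this, ih, hB]
  obtain ⟨i, rfl⟩ := h
  cases i with
  | ofNat n => rw [Int.ofNat_eq_coe, zpow_natCast, hpow]
  | negSucc n =>
      have : (f ^ ((n + 1 : ℕ) : ℤ)) ((f ^ (Int.negSucc n)) x) = x := by
        rw [← Equiv.Perm.mul_apply, ← zpow_add]
        have h0 : ((n + 1 : ℕ) : ℤ) + Int.negSucc n = 0 := by
          simp [Int.negSucc_eq]
        rw [h0, zpow_zero, Equiv.Perm.one_apply]
      have h2 := hpow (n+1) ((f ^ Int.negSucc n) x)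
      rw [← zpow_natCast, this] at h2
      exact h2.symm

lemma sameCycle_mono (f ρ : Equiv.Perm H) (hgen : ∀ x, f.SameCycle x (ρ x))
    {x y : H} (h : ρ.SameCycle x y) : f.SameCycle x y := by
  have hpow : ∀ (n : ℕ) (x : H), f.SameCycle x ((ρ ^ n) x) := by
    intro n
    induction n with
    | zero => intro x; simpa using Equiv.Perm.SameCycle.refl f x
    | succ n ih =>
      intro x
      have : (ρ ^ (n + 1)) x = (ρ ^ n) (ρ x) := by rw [pow_succ]; rfl
      rw [this]
      exact (hgen x).trans (ih (ρ x))
  obtain ⟨i, rfl⟩ := h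
  cases i with
  | ofNat n => rw [Int.ofNat_eq_coe, zpow_natCast]; exact hpow n x
  | negSucc n =>
      have : (ρ ^ ((n + 1 : ℕ) : ℤ)) ((ρ ^ (Int.negSucc n)) x) = x := by
        rw [← Equiv.Perm.mul_apply, ← zpow_add]
        have h0 : ((n + 1 : ℕ) : ℤ) + Int.negSucc n = 0 := by
          simp [Int.negSucc_eq]
        rw [h0, zpow_zero, Equiv.Perm.one_apply]
      have h2 := hpow (n+1) ((ρ ^ (Int.negSucc n)) x)
      rw [← zpow_natCast, this] at h2
      exact h2.symm

/-- key facts about the "partial reversal" of `f` along an invariant set `A` -/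
lemma reversal_inv (f : Equiv.Perm H) (A : H → Bool) (hA : ∀ h, A (f h) = A h)
    (ρ : Equiv.Perm H) (hρ : ∀ h, ρ h = if A h then f⁻¹ h else f h) :
    ∀ h, ρ⁻¹ h = if A h then f h else f⁻¹ h := by
  have hA' : ∀ h, A (f⁻¹ h) = A h := by
    intro h
    conv_rhs => rw [← f.apply_inv_self h, hA]
  intro h
  apply ρ.injective
  rw [ρ.apply_inv_self]
  by_cases hAh : A h
  · rw [if_pos hAh, hρ, hA, if_pos hAh, f.inv_apply_self]
  · rw [if_neg hAh, hρ, hA', if_neg hAh, f.apply_inv_self]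

lemma reversal_sameCycle (f : Equiv.Perm H) (A : H → Bool) (hA : ∀ h, A (f h) = A h)
    (ρ : Equiv.Perm H) (hρ : ∀ h, ρ h = if A h then f⁻¹ h else f h) :
    ∀ x y, ρ.SameCycle x y ↔ f.SameCycle x y := by
  have hinv := reversal_inv f A hA ρ hρ
  intro x y
  constructor
  · refine sameCycle_mono f ρ (fun z => ?_)
    rw [hρ]
    by_cases hAz : A z
    · rw [if_pos hAz]; exact ⟨-1, by simp⟩
    · rw [if_neg hAz]; exact ⟨1, by simp⟩
  · refine sameCycle_mono ρ f (fun z => ?_)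
    by_cases hAz : A z
    · have : f z = ρ⁻¹ z := by rw [hinv, if_pos hAz]
      rw [this]; exact ⟨-1, by simp⟩
    · have : f z = ρ z := by rw [hρ, if_neg hAz]
      rw [this]; exact ⟨1, by simp⟩

lemma small_cycle_sq (f : Equiv.Perm H) {v h : H} (hv : f (f v) = v)
    (hsc : f.SameCycle v h) : f (f h) = h := by
  obtain ⟨i, rfl⟩ := hsc
  have hcomm : ∀ z : H, f ((f ^ i) z) = (f ^ i) (f z) := by
    intro z
    have : f * f ^ i = f ^ i * f := (Commute.self_zpow f i).eq
    calc f ((f ^ i) z) = (f * f ^ i) z := rfl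
      _ = (f ^ i * f) z := by rw [this]
      _ = (f ^ i) (f z) := rfl
  rw [hcomm, hcomm, hv]

open Equiv in
open Classical in
lemma step_sound (α : Equiv.Perm H) (root : H) (f : Equiv.Perm H) (τ : H → Bool) (v : H)
    (hroot : ¬ f.SameCycle root v) (hsm : f (f v) = v) :
    Quot.mk (ReEmbed α root) (f, τ) = Quot.mk (ReEmbed α root)
      (f, fun h => xor (τ h) (xor (if f.SameCycle v h then true else false)
        (if f.SameCycle v (α h) then true else false))) := by
  apply Quot.sound
  refine ⟨v, hroot, fun h => ?_, fun h => rfl⟩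
  by_cases hc : f.SameCycle v h
  · rw [if_pos hc]
    exact f.injective (by rw [f.apply_inv_self, small_cycle_sq f hsm hc])
  · rw [if_neg hc]

open Classical in
lemma sound_all (α : Equiv.Perm H) (root : H) [Fintype H] [DecidableEq H]
    (f : Equiv.Perm H) (τ : H → Bool) (B : H → Bool)
    (hBinv : ∀ h, B (f h) = B h)
    (hBsupp : ∀ h, B h = true → f (f h) = h ∧ ¬ f.SameCycle root h) :
    Quot.mk (ReEmbed α root) (f, fun h => xor (τ h) (xor (B h) (B (α h))))
      = Quot.mk (ReEmbed α root) (f, τ) := by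
  suffices H : ∀ (n : ℕ) (B : H → Bool), (∀ h, B (f h) = B h) →
      (∀ h, B h = true → f (f h) = h ∧ ¬ f.SameCycle root h) →
      (Finset.univ.filter (fun h => B h = true)).card = n →
      Quot.mk (ReEmbed α root) (f, fun h => xor (τ h) (xor (B h) (B (α h))))
        = Quot.mk (ReEmbed α root) (f, τ) by
    exact H _ B hBinv hBsupp rfl
  intro n
  induction n using Nat.strong_induction_on with
  | _ n ih =>
    intro B hBinv hBsupp hcard
    by_cases hB0 : ∀ h, B h = false
    · have : (fun h => xor (τ h) (xor (B h) (B (α h)))) = τ := by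
        funext h; rw [hB0, hB0]; simp
      rw [this]
    · push_neg at hB0
      obtain ⟨v, hv⟩ := hB0
      have hv : B v = true := by
        cases hBv : B v
        · exact absurd hBv hv
        · rfl
      set g : H → Bool := fun h => if f.SameCycle v h then false else B h with hg
      have hscf : ∀ h, f.SameCycle v (f h) ↔ f.SameCycle v h := by
        intro h; exact Equiv.Perm.sameCycle_apply_right
      have hginv : ∀ h, g (f h) = g h := by
        intro h
        by_cases hc : f.SameCycle v h
        · rw [hg]; simp only []
          rw [if_pos ((hscf h).mpr hc), if_pos hc]
        · rw [hg]; simp only []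
          rw [if_neg (fun hc2 => hc ((hscf h).mp hc2)), if_neg hc, hBinv]
      have hgsupp : ∀ h, g h = true → f (f h) = h ∧ ¬ f.SameCycle root h := by
        intro h hh
        by_cases hc : f.SameCycle v h
        · rw [hg] at hh; simp only [if_pos hc] at hh
          exact Bool.noConfusion hh
        · rw [hg] at hh; simp only [if_neg hc] at hh
          exact hBsupp h hh
      have hBg : ∀ h, B h = xor (g h) (if f.SameCycle v h then true else false) := by
        intro h
        by_cases hc : f.SameCycle v h
        · rw [if_pos hc, hg]; simp only [if_pos hc]
          rw [invariant_congr f B hBinv hc, hv]; rfl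
        · rw [if_neg hc, hg]; simp only [if_neg hc]
          cases B h <;> rfl
      set τ' : H → Bool := fun h' => xor (τ h') (xor (g h') (g (α h'))) with hτ'
      have hvroot : ¬ f.SameCycle root v := (hBsupp v hv).2
      have hvsm : f (f v) = v := (hBsupp v hv).1
      have hlt : (Finset.univ.filter (fun h => g h = true)).card < n := by
        rw [← hcard]
        apply Finset.card_lt_card
        constructor
        · intro h hh
          simp only [Finset.mem_filter, Finset.mem_univ, true_and] at hh ⊢
          by_cases hc : f.SameCycle v h
          · rw [hg] at hh; simp only [if_pos hc] at hh
            exact Bool.noConfusion hh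
          · rw [hg] at hh; simp only [if_neg hc] at hh; exact hh
        · intro hsub
          have := hsub (Finset.mem_filter.mpr ⟨Finset.mem_univ v, hv⟩)
          simp only [Finset.mem_filter, Finset.mem_univ, true_and] at this
          rw [hg] at this
          simp only [if_pos (Equiv.Perm.SameCycle.refl f v)] at this
          exact Bool.noConfusion this
      have hs := step_sound α root f τ' v hvroot hvsm
      refine Eq.trans (congrArg (Quot.mk (ReEmbed α root)) ?_)
        (hs.symm.trans (ih _ hlt g hginv hgsupp rfl))
      refine congrArg (Prod.mk f) ?_
      funext h
      rw [hBg h, hBg (α h), hτ']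
      have bash : ∀ t x y a b : Bool,
          xor t (xor (xor x a) (xor y b)) = xor (xor t (xor x y)) (xor a b) := by
        decide
      by_cases hc1 : f.SameCycle v h
      · by_cases hc2 : f.SameCycle v (α h)
        · simp only [if_pos hc1, if_pos hc2]; exact bash ..
        · simp only [if_pos hc1, if_neg hc2]; exact bash ..
      · by_cases hc2 : f.SameCycle v (α h)
        · simp only [if_neg hc1, if_pos hc2]; exact bash ..
        · simp only [if_neg hc1, if_neg hc2]; exact bash ..

open Classical in
/-- Invariant preserved by re-embedding moves, relative to base configuration `(f, τ)`. -/
def Inv (α : Equiv.Perm H) (root : H) (f : Equiv.Perm H) (τ : H → Bool)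
    (c : RibbonConfig H) : Prop :=
  ∃ A B : H → Bool,
    (∀ h, A (f h) = A h) ∧ (∀ h, B (f h) = B h) ∧
    (∀ h, A h = true → ¬ f.SameCycle root h) ∧
    (∀ h, B h = true → ¬ f.SameCycle root h) ∧
    (∀ h, f (f h) ≠ h → A h = B h) ∧
    (∀ h, c.1 h = if A h then f⁻¹ h else f h) ∧
    (∀ h, c.2 h = xor (τ h) (xor (B h) (B (α h))))

lemma inv_base (α : Equiv.Perm H) (root : H) (f : Equiv.Perm H) (τ : H → Bool) :
    Inv α root f τ (f, τ) := by
  refine ⟨fun _ => false, fun _ => false, fun _ => rfl, fun _ => rfl,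
    fun h hh => Bool.noConfusion hh, fun h hh => Bool.noConfusion hh,
    fun _ _ => rfl, fun h => by simp, fun h => by simp⟩

lemma bash2 (t x y a b : Bool) :
    xor (xor t (xor x y)) (xor a b) = xor t (xor (xor x a) (xor y b)) := by
  cases t <;> cases x <;> cases y <;> cases a <;> cases b <;> rfl

lemma inv_step (α : Equiv.Perm H) (root : H) (f : Equiv.Perm H) (τ : H → Bool)
    {c c' : RibbonConfig H} (hI : Inv α root f τ c) (hR : ReEmbed α root c c') :
    Inv α root f τ c' := by
  classical
  obtain ⟨A, B, hAinv, hBinv, hAroot, hBroot, hAB, hc1, hc2⟩ := hI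
  obtain ⟨v, hvroot, h1, h2⟩ := hR
  have hsc : ∀ x y, c.1.SameCycle x y ↔ f.SameCycle x y :=
    reversal_sameCycle f A hAinv c.1 hc1
  have hcinv := reversal_inv f A hAinv c.1 hc1
  have hvroot' : ¬ f.SameCycle root v := fun hh => hvroot ((hsc root v).mpr hh)
  set cyc : H → Bool := fun h => if f.SameCycle v h then true else false with hcyc
  have hcyc_pos : ∀ h, f.SameCycle v h → cyc h = true := by
    intro h hh; simp only [hcyc, if_pos hh]
  have hcyc_neg : ∀ h, ¬ f.SameCycle v h → cyc h = false := by
    intro h hh; simp only [hcyc, if_neg hh]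
  have hcycinv : ∀ h, cyc (f h) = cyc h := by
    intro h
    by_cases hh : f.SameCycle v h
    · rw [hcyc_pos h hh, hcyc_pos (f h) (Equiv.Perm.sameCycle_apply_right.mpr hh)]
    · rw [hcyc_neg h hh, hcyc_neg (f h) (fun hc => hh (Equiv.Perm.sameCycle_apply_right.mp hc))]
  have hcycroot : ∀ h, cyc h = true → ¬ f.SameCycle root h := by
    intro h hh hroot
    by_cases hvh : f.SameCycle v h
    · exact hvroot' (hroot.trans hvh.symm)
    · rw [hcyc_neg h hvh] at hh; exact Bool.noConfusion hh
  have hroot' : ∀ (X : H → Bool), (∀ h, X h = true → ¬ f.SameCycle root h) →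
      ∀ h, xor (X h) (cyc h) = true → ¬ f.SameCycle root h := by
    intro X hX h hh
    cases hXh : X h
    · rw [hXh] at hh
      refine hcycroot h ?_
      cases hcy : cyc h
      · rw [hcy] at hh; exact Bool.noConfusion hh
      · rfl
    · exact hX h hXh
  refine ⟨fun h => xor (A h) (cyc h), fun h => xor (B h) (cyc h),
    fun h => ?_, fun h => ?_, hroot' A hAroot, hroot' B hBroot, ?_, ?_, ?_⟩
  · show xor (A (f h)) (cyc (f h)) = xor (A h) (cyc h)
    rw [hAinv, hcycinv]
  · show xor (B (f h)) (cyc (f h)) = xor (B h) (cyc h)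
    rw [hBinv, hcycinv]
  · intro h hh
    show xor (A h) (cyc h) = xor (B h) (cyc h)
    rw [hAB h hh]
  · -- permutation component
    intro h
    show c'.1 h = if xor (A h) (cyc h) = true then f⁻¹ h else f h
    rw [h1 h]
    by_cases hvh : f.SameCycle v h
    · rw [if_pos ((hsc v h).mpr hvh), hcinv h, hcyc_pos h hvh]
      cases hA : A h
      · simp
      · simp
    · rw [if_neg (fun hc => hvh ((hsc v h).mp hc)), hc1 h, hcyc_neg h hvh]
      cases hA : A h
      · simp
      · simp
  · -- twist component
    intro h
    show c'.2 h = xor (τ h) (xor (xor (B h) (cyc h)) (xor (B (α h)) (cyc (α h))))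
    rw [h2 h, hc2 h]
    have e1 : (if c.1.SameCycle v h then true else false) = cyc h := by
      by_cases hvh : f.SameCycle v h
      · rw [if_pos ((hsc v h).mpr hvh), hcyc_pos h hvh]
      · rw [if_neg (fun hc => hvh ((hsc v h).mp hc)), hcyc_neg h hvh]
    have e2 : (if c.1.SameCycle v (α h) then true else false) = cyc (α h) := by
      by_cases hvh : f.SameCycle v (α h)
      · rw [if_pos ((hsc v (α h)).mpr hvh), hcyc_pos (α h) hvh]
      · rw [if_neg (fun hc => hvh ((hsc v (α h)).mp hc)), hcyc_neg (α h) hvh]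
    rw [e1, e2]
    exact bash2 (τ h) (B h) (B (α h)) (cyc h) (cyc (α h))

lemma reembed_symm (α : Equiv.Perm H) (root : H) {c c' : RibbonConfig H}
    (h : ReEmbed α root c c') : ReEmbed α root c' c := by
  classical
  obtain ⟨v, hvroot, h1, h2⟩ := h
  set f := c.1 with hf
  set A : H → Bool := fun h => if f.SameCycle v h then true else false with hA
  have hAinv : ∀ h, A (f h) = A h := by
    intro h
    by_cases hh : f.SameCycle v h
    · simp only [hA, if_pos hh, if_pos (Equiv.Perm.sameCycle_apply_right.mpr hh)]
    · simp only [hA, if_neg hh,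
        if_neg (fun hc => hh (Equiv.Perm.sameCycle_apply_right.mp hc))]
  have hρ : ∀ h, c'.1 h = if A h then f⁻¹ h else f h := by
    intro h
    rw [h1 h]
    by_cases hh : f.SameCycle v h
    · rw [if_pos hh]
      have : A h = true := by simp only [hA, if_pos hh]
      simp [this]
    · rw [if_neg hh]
      have : A h = false := by simp only [hA, if_neg hh]
      simp [this]
  have hsc : ∀ x y, c'.1.SameCycle x y ↔ f.SameCycle x y :=
    reversal_sameCycle f A hAinv c'.1 hρ
  have hcinv := reversal_inv f A hAinv c'.1 hρ
  refine ⟨v, fun hh => hvroot ((hsc root v).mp hh), ?_, ?_⟩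
  · intro h
    by_cases hh : f.SameCycle v h
    · rw [if_pos ((hsc v h).mpr hh), hcinv h]
      have : A h = true := by simp only [hA, if_pos hh]
      simp [this]; rfl
    · rw [if_neg (fun hc => hh ((hsc v h).mp hc))]
      rw [hρ h]
      have : A h = false := by simp only [hA, if_neg hh]
      simp [this]; rfl
  · intro h
    rw [h2 h]
    have e1 : (if c'.1.SameCycle v h then true else false)
        = (if c.1.SameCycle v h then true else false) := by
      by_cases hh : f.SameCycle v h
      · rw [if_pos ((hsc v h).mpr hh), if_pos hh]
      · rw [if_neg (fun hc => hh ((hsc v h).mp hc)), if_neg hh]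
    have e2 : (if c'.1.SameCycle v (α h) then true else false)
        = (if c.1.SameCycle v (α h) then true else false) := by
      by_cases hh : f.SameCycle v (α h)
      · rw [if_pos ((hsc v (α h)).mpr hh), if_pos hh]
      · rw [if_neg (fun hc => hh ((hsc v (α h)).mp hc)), if_neg hh]
    rw [e1, e2]
    have bash3 : ∀ t a b : Bool, t = xor (xor t (xor a b)) (xor a b) := by decide
    exact bash3 ..

lemma inv_eqvGen (α : Equiv.Perm H) (root : H) (f : Equiv.Perm H) (τ : H → Bool)
    {a b : RibbonConfig H} (h : Relation.EqvGen (ReEmbed α root) a b) :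
    Inv α root f τ a ↔ Inv α root f τ b := by
  induction h with
  | rel a b hab =>
      exact ⟨fun hI => inv_step α root f τ hI hab,
        fun hI => inv_step α root f τ hI (reembed_symm α root hab)⟩
  | refl a => exact Iff.rfl
  | symm a b hab ih => exact ih.symm
  | trans a b c hab hbc ih1 ih2 => exact ih1.trans ih2

lemma key (α : Equiv.Perm H) (root : H) [Fintype H] [DecidableEq H]
    (f : Equiv.Perm H) (τ₁ τ₂ : H → Bool) :
    Quot.mk (ReEmbed α root) (f, τ₁) = Quot.mk (ReEmbed α root) (f, τ₂) ↔
    ∃ B : H → Bool, (∀ h, B (f h) = B h) ∧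
      (∀ h, B h = true → f (f h) = h ∧ ¬ f.SameCycle root h) ∧
      (∀ h, τ₁ h = xor (τ₂ h) (xor (B h) (B (α h)))) := by
  constructor
  · intro hEq
    have hgen := Quot.eqvGen_exact hEq
    have hI : Inv α root f τ₂ (f, τ₁) :=
      (inv_eqvGen α root f τ₂ hgen).mpr (inv_base α root f τ₂)
    obtain ⟨A, B, hAinv, hBinv, hAroot, hBroot, hAB, hc1, hc2⟩ := hI
    have hAsq : ∀ h, A h = true → f (f h) = h := by
      intro h hh
      have e := hc1 h
      rw [if_pos hh] at e
      have e' : f h = f⁻¹ h := e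
      rw [e', f.apply_inv_self]
    refine ⟨B, hBinv, ?_, hc2⟩
    intro h hh
    refine ⟨?_, hBroot h hh⟩
    by_contra hne
    exact hne (hAsq h (by rw [hAB h hne, hh]))
  · rintro ⟨B, h1, h2, h3⟩
    have hs := sound_all α root f τ₂ B h1 h2
    have : τ₁ = fun h => xor (τ₂ h) (xor (B h) (B (α h))) := funext h3
    rw [this]
    exact hs

lemma bool_cancel : ∀ a b c : Bool, xor a b = xor a c → b = c := by decide

lemma t_inj (π' α : Equiv.Perm H) (root : H)
    (hconn : ∀ x y : H, ∃ g ∈ Subgroup.closure ({π', α} : Set (Equiv.Perm H)), g x = y)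
    (B₁ B₂ : H → Bool)
    (h1π : ∀ h, B₁ (π' h) = B₁ h) (h2π : ∀ h, B₂ (π' h) = B₂ h)
    (h1r : ∀ h, B₁ h = true → ¬ π'.SameCycle root h)
    (h2r : ∀ h, B₂ h = true → ¬ π'.SameCycle root h)
    (heq : ∀ h, xor (B₁ h) (B₁ (α h)) = xor (B₂ h) (B₂ (α h))) :
    B₁ = B₂ := by
  set C : H → Bool := fun h => xor (B₁ h) (B₂ h) with hC
  have hCπ : ∀ h, C (π' h) = C h := by
    intro h; show xor (B₁ (π' h)) (B₂ (π' h)) = xor (B₁ h) (B₂ h)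
    rw [h1π, h2π]
  have hCα : ∀ h, C (α h) = C h := by
    intro h
    show xor (B₁ (α h)) (B₂ (α h)) = xor (B₁ h) (B₂ h)
    have hb : ∀ a b c d : Bool, xor a b = xor c d → xor b d = xor a c := by decide
    exact hb _ _ _ _ (heq h)
  have hg : ∀ g ∈ Subgroup.closure ({π', α} : Set (Equiv.Perm H)), ∀ h, C (g h) = C h := by
    intro g hgmem
    refine Subgroup.closure_induction ?_ ?_ ?_ ?_ hgmem
    · intro x hx
      rcases hx with rfl | hx
      · exact hCπ
      · rw [Set.mem_singleton_iff] at hx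
        subst hx
        exact hCα
    · intro h; rfl
    · intro x y _ _ hxh hyh h
      show C (x (y h)) = C h
      rw [hxh, hyh]
    · intro x _ hxh h
      have := hxh (x⁻¹ h)
      rw [Equiv.Perm.apply_inv_self] at this
      exact this.symm
  have hb1 : B₁ root = false := by
    cases hr : B₁ root
    · rfl
    · exact absurd (Equiv.Perm.SameCycle.refl π' root) (h1r root hr)
  have hb2 : B₂ root = false := by
    cases hr : B₂ root
    · rfl
    · exact absurd (Equiv.Perm.SameCycle.refl π' root) (h2r root hr)
  have hCroot : C root = false := by
    show xor (B₁ root) (B₂ root) = false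
    rw [hb1, hb2]; rfl
  funext h
  obtain ⟨g, hgmem, hgr⟩ := hconn root h
  have hCh := hg g hgmem root
  rw [hgr, hCroot] at hCh
  have : xor (B₁ h) (B₂ h) = false := hCh
  revert this
  cases B₁ h <;> cases B₂ h <;> simp

lemma invol_count {X : Type*} [Finite X] [DecidableEq X] (σ : X → X)
    (h2 : ∀ x, σ (σ x) = x) (hf : ∀ x, σ x ≠ x) {m : ℕ}
    (hm : 2 * m = Nat.card X) :
    Nat.card {f : X → Bool // ∀ x, f (σ x) = f x} = 2 ^ m := by
  set r : X → X → Prop := fun x y => σ x = y with hr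
  have hsound : ∀ x : X, Quot.mk r x = Quot.mk r (σ x) := fun x => Quot.sound rfl
  have hex : ∀ x y : X, Relation.EqvGen r x y → y = x ∨ y = σ x := by
    intro x y hgen
    induction hgen with
    | rel a b hab => exact Or.inr hab.symm
    | refl a => exact Or.inl rfl
    | symm a b hab ih =>
        rcases ih with rfl | rfl
        · exact Or.inl rfl
        · exact Or.inr (h2 a).symm
    | trans a b c hab hbc ih1 ih2 =>
        rcases ih2 with rfl | rfl
        · exact ih1
        · rcases ih1 with rfl | rfl
          · exact Or.inr rfl
          · exact Or.inl (h2 a)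
  have hexact : ∀ x y : X, Quot.mk r x = Quot.mk r y → y = x ∨ y = σ x :=
    fun x y hxy => hex x y (Quot.eqvGen_exact hxy)
  set φ : X → Quot r × Bool := fun x => (Quot.mk r x, decide (x = (Quot.mk r x).out)) with hφ
  have hinj : Function.Injective φ := by
    intro x y hxy
    have h1 : Quot.mk r x = Quot.mk r y := congrArg Prod.fst hxy
    have hbit : decide (x = (Quot.mk r x).out) = decide (y = (Quot.mk r y).out) :=
      congrArg Prod.snd hxy
    rcases hexact x y h1 with rfl | rfl
    · rfl
    · exfalso
      rw [← h1] at hbit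
      rcases hexact x (Quot.mk r x).out (Quot.out_eq _).symm with ho | ho
      · rw [ho, decide_eq_decide] at hbit
        exact hf x (hbit.mp rfl)
      · rw [ho, decide_eq_decide] at hbit
        exact hf x (hbit.mpr rfl).symm
  have hsurj : Function.Surjective φ := by
    rintro ⟨q, b⟩
    cases b
    · refine ⟨σ q.out, ?_⟩
      have hmk : Quot.mk r (σ q.out) = q := (hsound q.out).symm.trans (Quot.out_eq q)
      show (Quot.mk r (σ q.out), decide (σ q.out = (Quot.mk r (σ q.out)).out)) = (q, false)
      rw [hmk]
      refine Prod.ext rfl ?_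
      show decide (σ q.out = q.out) = false
      exact decide_eq_false (hf q.out)
    · refine ⟨q.out, ?_⟩
      show (Quot.mk r q.out, decide (q.out = (Quot.mk r q.out).out)) = (q, true)
      rw [Quot.out_eq]
      refine Prod.ext rfl ?_
      exact decide_eq_true rfl
  have hcardX : Nat.card X = 2 * Nat.card (Quot r) := by
    rw [Nat.card_eq_of_bijective φ ⟨hinj, hsurj⟩, Nat.card_prod]
    have : Nat.card Bool = 2 := by
      rw [Nat.card_eq_fintype_card]; rfl
    rw [this]
    ring
  have hQ : Nat.card (Quot r) = m := by omega
  have e : {f : X → Bool // ∀ x, f (σ x) = f x} ≃ (Quot r → Bool) :=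
    { toFun := fun f => Quot.lift f.1 (fun a b hab => by
        have : σ a = b := hab
        rw [← this]
        exact (f.2 a).symm)
      invFun := fun g => ⟨fun x => g (Quot.mk r x), fun x => congrArg g (hsound x).symm⟩
      left_inv := fun f => Subtype.ext (funext fun x => rfl)
      right_inv := fun g => funext fun q => by
        induction q using Quot.ind with
        | _ x => rfl }
  rw [Nat.card_congr e, Nat.card_fun]
  have : Nat.card Bool = 2 := by rw [Nat.card_eq_fintype_card]; rfl
  rw [this, hQ]

lemma good_count [Fintype H] [DecidableEq H] (π' : Equiv.Perm H) (root : H)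
    (V₁ V₂ : ℕ)
    (hV₁ : V₁ = Nat.card {h : H // π' h = h ∧ ¬ π'.SameCycle root h})
    (hV₂ : 2 * V₂ = Nat.card {h : H // π' (π' h) = h ∧ π' h ≠ h ∧ ¬ π'.SameCycle root h}) :
    Nat.card {B : H → Bool // (∀ h, B (π' h) = B h) ∧
        ∀ h, B h = true → π' (π' h) = h ∧ ¬ π'.SameCycle root h} = 2 ^ (V₁ + V₂) := by
  classical
  have hTclosed : ∀ x : {h : H // π' (π' h) = h ∧ π' h ≠ h ∧ ¬ π'.SameCycle root h},
      π' (π' (π' x.1)) = π' x.1 ∧ π' (π' x.1) ≠ π' x.1 ∧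
      ¬ π'.SameCycle root (π' x.1) := by
    intro x
    refine ⟨by rw [x.2.1], ?_, ?_⟩
    · intro he
      exact x.2.2.1 (π'.injective he)
    · intro hsc
      exact x.2.2.2 (Equiv.Perm.sameCycle_apply_right.mp hsc)
  set T := {h : H // π' (π' h) = h ∧ π' h ≠ h ∧ ¬ π'.SameCycle root h} with hT
  set σT : T → T := fun x => ⟨π' x.1, hTclosed x⟩ with hσT
  have hσ2 : ∀ x : T, σT (σT x) = x := fun x => Subtype.ext x.2.1
  have hσf : ∀ x : T, σT x ≠ x := fun x he => x.2.2.1 (congrArg Subtype.val he)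
  have ecard : Nat.card {g : T → Bool // ∀ x, g (σT x) = g x} = 2 ^ V₂ :=
    invol_count σT hσ2 hσf hV₂
  set F := {h : H // π' h = h ∧ ¬ π'.SameCycle root h} with hF
  -- the map from pairs to good functions
  set D : (F → Bool) × {g : T → Bool // ∀ x, g (σT x) = g x} → (H → Bool) :=
    fun p h =>
      if hFc : π' h = h ∧ ¬ π'.SameCycle root h then p.1 ⟨h, hFc⟩
      else if hTc : π' (π' h) = h ∧ π' h ≠ h ∧ ¬ π'.SameCycle root h then p.2.1 ⟨h, hTc⟩
      else false with hD
  have hDF : ∀ p (h : H) (hFc : π' h = h ∧ ¬ π'.SameCycle root h), D p h = p.1 ⟨h, hFc⟩ := by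
    intro p h hFc
    show dite _ _ _ = _
    rw [dif_pos hFc]
  have hDT : ∀ p (h : H) (hTc : π' (π' h) = h ∧ π' h ≠ h ∧ ¬ π'.SameCycle root h),
      D p h = p.2.1 ⟨h, hTc⟩ := by
    intro p h hTc
    show dite _ _ _ = _
    rw [dif_neg (fun hFc => hTc.2.1 hFc.1), dif_pos hTc]
  have hD0 : ∀ p (h : H), ¬ (π' h = h ∧ ¬ π'.SameCycle root h) →
      ¬ (π' (π' h) = h ∧ π' h ≠ h ∧ ¬ π'.SameCycle root h) → D p h = false := by
    intro p h h1 h2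
    show dite _ _ _ = _
    rw [dif_neg h1, dif_neg h2]
  have hDsupp : ∀ p (h : H), D p h = true → π' (π' h) = h ∧ ¬ π'.SameCycle root h := by
    intro p h hh
    by_cases hFc : π' h = h ∧ ¬ π'.SameCycle root h
    · rw [hFc.1, hFc.1]
      exact ⟨rfl, hFc.2⟩
    · by_cases hTc : π' (π' h) = h ∧ π' h ≠ h ∧ ¬ π'.SameCycle root h
      · exact ⟨hTc.1, hTc.2.2⟩
      · rw [hD0 p h hFc hTc] at hh
        exact Bool.noConfusion hh
  have hDinv : ∀ p (h : H), D p (π' h) = D p h := by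
    intro p h
    by_cases hFc : π' h = h ∧ ¬ π'.SameCycle root h
    · rw [hFc.1]
    · by_cases hTc : π' (π' h) = h ∧ π' h ≠ h ∧ ¬ π'.SameCycle root h
      · have hTc' : π' (π' (π' h)) = π' h ∧ π' (π' h) ≠ π' h ∧
            ¬ π'.SameCycle root (π' h) := hTclosed ⟨h, hTc⟩
        have hFc' : ¬ (π' (π' h) = π' h ∧ ¬ π'.SameCycle root (π' h)) :=
          fun hc => hTc.2.1 (π'.injective hc.1)
        rw [hDT p h hTc]
        show dite _ _ _ = _
        rw [dif_neg hFc', dif_pos hTc']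
        exact (p.2.2 ⟨h, hTc⟩ : p.2.1 (σT ⟨h, hTc⟩) = p.2.1 ⟨h, hTc⟩)
      · have hFc' : ¬ (π' (π' h) = π' h ∧ ¬ π'.SameCycle root (π' h)) := by
          rintro ⟨he, hsc⟩
          have hfix : π' h = h := π'.injective he
          exact hFc ⟨hfix, fun hr => hsc (by rw [hfix]; exact hr)⟩
        have hTc' : ¬ (π' (π' (π' h)) = π' h ∧ π' (π' h) ≠ π' h ∧
            ¬ π'.SameCycle root (π' h)) := by
          rintro ⟨ha, hb, hc⟩
          have ha' : π' (π' h) = h := π'.injective ha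
          refine hTc ⟨ha', fun he => hb ?_, fun hr => hc (Equiv.Perm.sameCycle_apply_right.mpr hr)⟩
          rw [he]; exact he
        rw [hD0 p h hFc hTc, hD0 p (π' h) hFc' hTc']
  set Ψ : (F → Bool) × {g : T → Bool // ∀ x, g (σT x) = g x} →
      {B : H → Bool // (∀ h, B (π' h) = B h) ∧
        ∀ h, B h = true → π' (π' h) = h ∧ ¬ π'.SameCycle root h} :=
    fun p => ⟨D p, hDinv p, hDsupp p⟩ with hΨ
  have hinj : Function.Injective Ψ := by
    intro p q hpq
    have hval : D p = D q := congrArg Subtype.val hpq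
    refine Prod.ext ?_ (Subtype.ext ?_)
    · funext x
      have := congrFun hval x.1
      rw [hDF p x.1 x.2, hDF q x.1 x.2] at this
      exact this
    · funext x
      have := congrFun hval x.1
      rw [hDT p x.1 x.2, hDT q x.1 x.2] at this
      exact this
  have hsurj : Function.Surjective Ψ := by
    intro B
    refine ⟨(fun x => B.1 x.1, ⟨fun x => B.1 x.1, fun x => B.2.1 x.1⟩), ?_⟩
    apply Subtype.ext
    funext h
    show D (fun x => B.1 x.1, ⟨fun x => B.1 x.1, fun x => B.2.1 x.1⟩) h = B.1 h
    by_cases hFc : π' h = h ∧ ¬ π'.SameCycle root h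
    · rw [hDF _ h hFc]
    · by_cases hTc : π' (π' h) = h ∧ π' h ≠ h ∧ ¬ π'.SameCycle root h
      · rw [hDT _ h hTc]
      · rw [hD0 _ h hFc hTc]
        cases hb : B.1 h
        · rfl
        · exfalso
          obtain ⟨hsq, hroot⟩ := B.2.2 h hb
          by_cases hfix : π' h = h
          · exact hFc ⟨hfix, hroot⟩
          · exact hTc ⟨hsq, hfix, hroot⟩
  have := Nat.card_eq_of_bijective Ψ ⟨hinj, hsurj⟩
  rw [← this, Nat.card_prod, Nat.card_fun, ecard]
  have hb2 : Nat.card Bool = 2 := by rw [Nat.card_eq_fintype_card]; rfl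
  rw [hb2, ← hV₁, pow_add]

end RibbonAux


open RibbonAux in
/-- Stabilizer of a rooted connected ribbon graph under edge twists: the group
`T = (ℤ/2)^{E}` (functions on half-edges constant on edges) acts by adding twists; two
ribbon graphs are identified iff related by re-embeddings of non-root vertices (the
quotient `Quot (ReEmbed α root)`). The stabilizer has cardinality `2^{V₁+V₂}`, where
`V₁`, `V₂` are the numbers of non-root vertices of degree one and two; consequently the
orbit has cardinality `2^{E - V₁ - V₂}`. -/
theorem rooted_ribbon_twist_stabilizer {H : Type*} [Fintype H] [DecidableEq H]
    (π α : Equiv.Perm H) (τ : H → Bool) (root : H)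
    (hαinv : ∀ h, α (α h) = h) (hαfpf : ∀ h, α h ≠ h)
    (hτ : ∀ h, τ (α h) = τ h)
    (hconn : ∀ x y : H, ∃ g ∈ Subgroup.closure ({π, α} : Set (Equiv.Perm H)), g x = y)
    (V₁ V₂ E : ℕ)
    (hV₁ : V₁ = Nat.card {h : H // π h = h ∧ ¬ π.SameCycle root h})
    (hV₂ : 2 * V₂ = Nat.card {h : H // π (π h) = h ∧ π h ≠ h ∧ ¬ π.SameCycle root h})
    (hE : 2 * E = Fintype.card H) :
    Nat.card {s : H → Bool // (∀ h, s (α h) = s h) ∧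
        Quot.mk (ReEmbed α root) (π, fun h => xor (τ h) (s h))
          = Quot.mk (ReEmbed α root) (π, τ)}
      = 2 ^ (V₁ + V₂) ∧
    Nat.card {c : Quot (ReEmbed α root) // ∃ s : H → Bool, (∀ h, s (α h) = s h) ∧
        c = Quot.mk (ReEmbed α root) (π, fun h => xor (τ h) (s h))}
      = 2 ^ (E - V₁ - V₂) := by
  classical
  have hGoodCard : Nat.card {B : H → Bool // (∀ h, B (π h) = B h) ∧
      ∀ h, B h = true → π (π h) = h ∧ ¬ π.SameCycle root h} = 2 ^ (V₁ + V₂) :=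
    good_count π root V₁ V₂ hV₁ hV₂
  have hroot_of : ∀ B : {B : H → Bool // (∀ h, B (π h) = B h) ∧
      ∀ h, B h = true → π (π h) = h ∧ ¬ π.SameCycle root h},
      ∀ h, B.1 h = true → ¬ π.SameCycle root h :=
    fun B h hh => (B.2.2 h hh).2
  have htmα : ∀ B : H → Bool, (∀ h, B (α h) = B h) → True := fun _ _ => trivial
  have htm_inv : ∀ (B : H → Bool), ∀ h,
      xor (B (α h)) (B (α (α h))) = xor (B h) (B (α h)) := by
    intro B h
    rw [hαinv]
    exact Bool.xor_comm _ _
  -- Part 1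
  have hFmem : ∀ B : {B : H → Bool // (∀ h, B (π h) = B h) ∧
      ∀ h, B h = true → π (π h) = h ∧ ¬ π.SameCycle root h},
      Quot.mk (ReEmbed α root) (π, fun h => xor (τ h) (xor (B.1 h) (B.1 (α h))))
        = Quot.mk (ReEmbed α root) (π, τ) := by
    intro B
    exact (key α root π (fun h => xor (τ h) (xor (B.1 h) (B.1 (α h)))) τ).mpr
      ⟨B.1, B.2.1, B.2.2, fun h => rfl⟩
  set SF : {B : H → Bool // (∀ h, B (π h) = B h) ∧
      ∀ h, B h = true → π (π h) = h ∧ ¬ π.SameCycle root h} →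
      {s : H → Bool // (∀ h, s (α h) = s h) ∧
        Quot.mk (ReEmbed α root) (π, fun h => xor (τ h) (s h))
          = Quot.mk (ReEmbed α root) (π, τ)} :=
    fun B => ⟨fun h => xor (B.1 h) (B.1 (α h)), fun h => htm_inv B.1 h, hFmem B⟩ with hSF
  have hSFbij : Function.Bijective SF := by
    constructor
    · intro B B' hBB
      have hval : (fun h => xor (B.1 h) (B.1 (α h)))
          = (fun h => xor (B'.1 h) (B'.1 (α h))) := congrArg Subtype.val hBB
      exact Subtype.ext (t_inj π α root hconn B.1 B'.1 B.2.1 B'.2.1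
        (hroot_of B) (hroot_of B') (fun h => congrFun hval h))
    · rintro ⟨s, hs1, hs2⟩
      obtain ⟨B, hB1, hB2, hB3⟩ := (key α root π (fun h => xor (τ h) (s h)) τ).mp hs2
      refine ⟨⟨B, hB1, hB2⟩, Subtype.ext ?_⟩
      funext h
      exact (bool_cancel (τ h) _ _ (hB3 h)).symm
  have part1 : Nat.card {s : H → Bool // (∀ h, s (α h) = s h) ∧
      Quot.mk (ReEmbed α root) (π, fun h => xor (τ h) (s h))
        = Quot.mk (ReEmbed α root) (π, τ)} = 2 ^ (V₁ + V₂) :=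
    (Nat.card_eq_of_bijective SF hSFbij).symm.trans hGoodCard
  refine ⟨part1, ?_⟩
  -- Part 2
  have hScard : Nat.card {s : H → Bool // ∀ h, s (α h) = s h} = 2 ^ E := by
    refine invol_count (⇑α) hαinv hαfpf ?_
    rw [Nat.card_eq_fintype_card]
    exact hE
  have hs0 : ∀ c : {c : Quot (ReEmbed α root) // ∃ s : H → Bool, (∀ h, s (α h) = s h) ∧
      c = Quot.mk (ReEmbed α root) (π, fun h => xor (τ h) (s h))},
      (∀ h, c.2.choose (α h) = c.2.choose h) ∧
      c.1 = Quot.mk (ReEmbed α root) (π, fun h => xor (τ h) (c.2.choose h)) :=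
    fun c => c.2.choose_spec
  have claimA : ∀ (c : {c : Quot (ReEmbed α root) // ∃ s : H → Bool,
      (∀ h, s (α h) = s h) ∧
      c = Quot.mk (ReEmbed α root) (π, fun h => xor (τ h) (s h))})
      (B : {B : H → Bool // (∀ h, B (π h) = B h) ∧
        ∀ h, B h = true → π (π h) = h ∧ ¬ π.SameCycle root h}),
      c.1 = Quot.mk (ReEmbed α root)
        (π, fun h => xor (τ h) (xor (c.2.choose h) (xor (B.1 h) (B.1 (α h))))) := by
    intro c B
    exact ((hs0 c).2).trans (((key α root π
      (fun h => xor (τ h) (xor (c.2.choose h) (xor (B.1 h) (B.1 (α h)))))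
      (fun h => xor (τ h) (c.2.choose h))).mpr
      ⟨B.1, B.2.1, B.2.2,
        fun h => (Bool.xor_assoc (τ h) (c.2.choose h) _).symm⟩).symm)
  set Φ : ({c : Quot (ReEmbed α root) // ∃ s : H → Bool, (∀ h, s (α h) = s h) ∧
        c = Quot.mk (ReEmbed α root) (π, fun h => xor (τ h) (s h))} ×
      {B : H → Bool // (∀ h, B (π h) = B h) ∧
        ∀ h, B h = true → π (π h) = h ∧ ¬ π.SameCycle root h}) →
      {s : H → Bool // ∀ h, s (α h) = s h} :=
    fun p => ⟨fun h => xor (p.1.2.choose h) (xor (p.2.1 h) (p.2.1 (α h))),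
      fun h => by
        show xor (p.1.2.choose (α h)) (xor (p.2.1 (α h)) (p.2.1 (α (α h))))
          = xor (p.1.2.choose h) (xor (p.2.1 h) (p.2.1 (α h)))
        rw [(hs0 p.1).1 h, htm_inv p.2.1 h]⟩ with hΦ
  have hΦbij : Function.Bijective Φ := by
    constructor
    · intro p q hpq
      have hval : (fun h => xor (p.1.2.choose h) (xor (p.2.1 h) (p.2.1 (α h))))
          = (fun h => xor (q.1.2.choose h) (xor (q.2.1 h) (q.2.1 (α h)))) :=
        congrArg Subtype.val hpq
      have hc : p.1 = q.1 := by
        apply Subtype.ext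
        rw [claimA p.1 p.2, claimA q.1 q.2]
        exact congrArg
          (fun s : H → Bool => Quot.mk (ReEmbed α root) (π, fun h => xor (τ h) (s h))) hval
      have hch : p.1.2.choose = q.1.2.choose :=
        congrArg (fun c : {c : Quot (ReEmbed α root) // ∃ s : H → Bool,
          (∀ h, s (α h) = s h) ∧
          c = Quot.mk (ReEmbed α root) (π, fun h => xor (τ h) (s h))} => c.2.choose) hc
      have htmeq : ∀ h, xor (p.2.1 h) (p.2.1 (α h)) = xor (q.2.1 h) (q.2.1 (α h)) := by
        intro h
        have hv := congrFun hval h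
        rw [congrFun hch h] at hv
        exact bool_cancel _ _ _ hv
      exact Prod.ext hc (Subtype.ext
        (t_inj π α root hconn p.2.1 q.2.1 p.2.2.1 q.2.2.1
          (hroot_of p.2) (hroot_of q.2) htmeq))
    · rintro ⟨s, hsα⟩
      set c : {c : Quot (ReEmbed α root) // ∃ s : H → Bool, (∀ h, s (α h) = s h) ∧
          c = Quot.mk (ReEmbed α root) (π, fun h => xor (τ h) (s h))} :=
        ⟨Quot.mk (ReEmbed α root) (π, fun h => xor (τ h) (s h)), ⟨s, hsα, rfl⟩⟩ with hc
      have heq : Quot.mk (ReEmbed α root) (π, fun h => xor (τ h) (s h))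
          = Quot.mk (ReEmbed α root) (π, fun h => xor (τ h) (c.2.choose h)) := (hs0 c).2
      obtain ⟨B, hB1, hB2, hB3⟩ := (key α root π (fun h => xor (τ h) (s h))
        (fun h => xor (τ h) (c.2.choose h))).mp heq
      refine ⟨(c, ⟨B, hB1, hB2⟩), Subtype.ext ?_⟩
      funext h
      have h2 : xor (τ h) (s h)
          = xor (τ h) (xor (c.2.choose h) (xor (B h) (B (α h)))) := by
        rw [hB3 h, Bool.xor_assoc]
      exact (bool_cancel _ _ _ h2).symm
  have hprod : (2 : ℕ) ^ E =
      Nat.card {c : Quot (ReEmbed α root) // ∃ s : H → Bool, (∀ h, s (α h) = s h) ∧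
        c = Quot.mk (ReEmbed α root) (π, fun h => xor (τ h) (s h))} * 2 ^ (V₁ + V₂) := by
    rw [← hScard, ← Nat.card_eq_of_bijective Φ hΦbij, Nat.card_prod, hGoodCard]
  have hne : Nonempty {c : Quot (ReEmbed α root) // ∃ s : H → Bool, (∀ h, s (α h) = s h) ∧
      c = Quot.mk (ReEmbed α root) (π, fun h => xor (τ h) (s h))} :=
    ⟨⟨Quot.mk (ReEmbed α root) (π, τ), ⟨fun _ => false, fun _ => rfl,
      congrArg (fun t : H → Bool => Quot.mk (ReEmbed α root) (π, t))
        (funext fun h => (Bool.xor_false (τ h)).symm)⟩⟩⟩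
  have hOpos : 0 < Nat.card {c : Quot (ReEmbed α root) // ∃ s : H → Bool,
      (∀ h, s (α h) = s h) ∧
      c = Quot.mk (ReEmbed α root) (π, fun h => xor (τ h) (s h))} := Nat.card_pos
  have hle : V₁ + V₂ ≤ E := by
    have h1 : (2:ℕ) ^ (V₁ + V₂) ≤ 2 ^ E := by
      calc (2:ℕ) ^ (V₁ + V₂) = 1 * 2 ^ (V₁ + V₂) := (one_mul _).symm
        _ ≤ _ * 2 ^ (V₁ + V₂) := Nat.mul_le_mul_right _ hOpos
        _ = 2 ^ E := hprod.symm
    exact (Nat.pow_le_pow_iff_right (by norm_num)).mp h1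
  have hsplit : (2:ℕ) ^ E = 2 ^ (E - (V₁ + V₂)) * 2 ^ (V₁ + V₂) := by
    rw [← pow_add, Nat.sub_add_cancel hle]
  have hfin : Nat.card {c : Quot (ReEmbed α root) // ∃ s : H → Bool,
      (∀ h, s (α h) = s h) ∧
      c = Quot.mk (ReEmbed α root) (π, fun h => xor (τ h) (s h))}
      = 2 ^ (E - (V₁ + V₂)) :=
    Nat.eq_of_mul_eq_mul_right (Nat.pow_pos (by norm_num))
      (hprod.symm.trans hsplit)
  rw [hfin, Nat.sub_sub]
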